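/- Proposition 2 (discrete energy estimate for the SBP–SAT Galerkin scheme with penalties σ₀ = −1, σ_N = 1): suppose U : ℝ → ℝ^{N+1} is continuously differentiable and satisfies, for all t ≥ 0, P U′(t) + a Q U(t) = E B⁽ᴺ⁾ Dₓ U(t) − (√E Dₓ)ᵀ P (√E Dₓ) U(t) + SAT(t), where SAT(t) = −e₀·(a·U₀(t) − ε₀·(Dₓ U(t))₀) + e_N·(−ε_N·(Dₓ U(t))_N). Then for every t ≥ 0, U(t)ᵀ P U(t) + 2 ∫₀ᵗ (√E Dₓ U(s))ᵀ P (√E Dₓ U(s)) ds ≤ U(0)ᵀ P U(0). -/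

import Mathlib

open Matrix

def Bmat (n : ℕ) : Matrix (Fin (n+1)) (Fin (n+1)) ℝ :=
  Matrix.of fun i j =>
    if i = j ∧ i = Fin.last n then 1 else if i = j ∧ i = 0 then -1 else 0

lemma Bdot (n : ℕ) (hn : 1 ≤ n) (x y : Fin (n+1) → ℝ) :
    x ⬝ᵥ (Bmat n).mulVec y = x (Fin.last n) * y (Fin.last n) - x 0 * y 0 := by
  have h0 : (Fin.last n) ≠ (0 : Fin (n+1)) := by
    simp [Fin.ext_iff, Fin.last]; omega
  have hB : ∀ i j, Bmat n i j =
      (if j = i then (if i = Fin.last n then (1:ℝ) else if i = 0 then -1 else 0) else 0) := by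
    intro i j
    simp only [Bmat, Matrix.of_apply]
    by_cases h : i = j <;> by_cases h2 : i = Fin.last n <;> by_cases h3 : i = 0 <;>
      subst_eqs <;> simp_all [eq_comm]
  simp only [dotProduct, mulVec, hB, mul_ite, ite_mul, mul_zero, zero_mul, mul_one,
    Finset.sum_ite_eq, Finset.sum_ite_eq', Finset.mem_univ, if_true, one_mul, neg_one_mul]
  have hsplit : ∀ i : Fin (n+1),
      (if i = Fin.last n then x i * y i else if i = 0 then x i * -y i else 0)
        = (if i = Fin.last n then x i * y i else 0) + (if i = 0 then -(x i * y i) else 0) := by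
    intro i
    split_ifs with h1 h2 <;> simp_all
  rw [Finset.sum_congr rfl fun i _ => hsplit i]
  simp only [Finset.sum_add_distrib, Finset.sum_ite_eq', Finset.mem_univ, if_true]
  ring

theorem stmt5 (N : ℕ) (hN : 1 ≤ N) (a : ℝ) (ha : 0 ≤ a)
    (P Q : Matrix (Fin (N+1)) (Fin (N+1)) ℝ)
    (hP : P.PosDef) (hSBP : Q + Qᵀ = Bmat N)
    (ε : Fin (N+1) → ℝ) (hε : ∀ i, 0 ≤ ε i)
    (E sqrtE Dx : Matrix (Fin (N+1)) (Fin (N+1)) ℝ)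
    (hE : E = Matrix.diagonal ε)
    (hsqrtE : sqrtE = Matrix.diagonal fun i => Real.sqrt (ε i))
    (hDx : Dx = P⁻¹ * Q)
    (U : ℝ → Fin (N+1) → ℝ) (hU : ContDiff ℝ 1 U)
    (hode : ∀ t : ℝ, 0 ≤ t →
      P.mulVec (deriv U t) + a • Q.mulVec (U t)
        = (E * Bmat N * Dx).mulVec (U t)
          - ((sqrtE * Dx)ᵀ * P * (sqrtE * Dx)).mulVec (U t)
          + ((-(a * U t 0 - ε 0 * Dx.mulVec (U t) 0)) • (Pi.single 0 1 : Fin (N+1) → ℝ)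
             + (-(ε (Fin.last N) * Dx.mulVec (U t) (Fin.last N)))
                • (Pi.single (Fin.last N) 1 : Fin (N+1) → ℝ))) :
    ∀ t : ℝ, 0 ≤ t →
      U t ⬝ᵥ P.mulVec (U t)
        + 2 * ∫ s in (0:ℝ)..t,
            (sqrtE * Dx).mulVec (U s) ⬝ᵥ P.mulVec ((sqrtE * Dx).mulVec (U s))
      ≤ U 0 ⬝ᵥ P.mulVec (U 0) := by
  have hPsymm : Pᵀ = P := by
    have := hP.1
    simpa [Matrix.IsHermitian, Matrix.conjTranspose_eq_transpose_of_trivial] using this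
  -- symmetry of the quadratic form
  have hsym : ∀ (x y : Fin (N+1) → ℝ), x ⬝ᵥ P.mulVec y = y ⬝ᵥ P.mulVec x := by
    intro x y
    rw [Matrix.dotProduct_mulVec, ← Matrix.mulVec_transpose, hPsymm, dotProduct_comm]
  have hUdiff : Differentiable ℝ U := hU.differentiable one_ne_zero
  have hUc : Continuous U := hUdiff.continuous
  -- g: the integrand
  set g : ℝ → ℝ := fun s =>
      (sqrtE * Dx).mulVec (U s) ⬝ᵥ P.mulVec ((sqrtE * Dx).mulVec (U s)) with hg_def
  have hcoordc : ∀ i, Continuous fun s => U s i := fun i => (continuous_apply i).comp hUc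
  have hVc : ∀ i, Continuous fun s => (sqrtE * Dx).mulVec (U s) i := by
    intro i
    simp only [mulVec, dotProduct]
    exact continuous_finset_sum _ fun j _ => (continuous_const.mul (hcoordc j))
  have hgc : Continuous g := by
    rw [hg_def]
    simp only [dotProduct, mulVec]
    refine continuous_finset_sum _ fun i _ => (hVc i).mul ?_
    exact continuous_finset_sum _ fun j _ => continuous_const.mul (hVc j)
  -- derivative of quadratic form
  have hquad : ∀ t, HasDerivAt (fun s => U s ⬝ᵥ P.mulVec (U s))
      (2 * (U t ⬝ᵥ P.mulVec (deriv U t))) t := by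
    intro t
    have hcoord : ∀ i, HasDerivAt (fun s => U s i) (deriv U t i) t :=
      fun i => hasDerivAt_pi.1 (hUdiff t).hasDerivAt i
    have key : HasDerivAt (fun s => ∑ i, ∑ j, U s i * (P i j * U s j))
        (∑ i, ∑ j, (deriv U t i * (P i j * U t j) + U t i * (P i j * deriv U t j))) t := by
      refine HasDerivAt.fun_sum fun i _ => HasDerivAt.fun_sum fun j _ => ?_
      exact (hcoord i).mul ((hcoord j).const_mul (P i j))
    have e1 : (fun s => U s ⬝ᵥ P.mulVec (U s)) = fun s => ∑ i, ∑ j, U s i * (P i j * U s j) := by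
      funext s; simp [dotProduct, mulVec, Finset.mul_sum]
    rw [e1]
    convert key using 1
    have e2 : U t ⬝ᵥ P.mulVec (deriv U t) = ∑ i, ∑ j, U t i * (P i j * deriv U t j) := by
      simp [dotProduct, mulVec, Finset.mul_sum]
    have e3 : deriv U t ⬝ᵥ P.mulVec (U t) = ∑ i, ∑ j, deriv U t i * (P i j * U t j) := by
      simp [dotProduct, mulVec, Finset.mul_sum]
    have e4 : deriv U t ⬝ᵥ P.mulVec (U t) = U t ⬝ᵥ P.mulVec (deriv U t) := hsym _ _
    calc 2 * (U t ⬝ᵥ P.mulVec (deriv U t))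
        = deriv U t ⬝ᵥ P.mulVec (U t) + U t ⬝ᵥ P.mulVec (deriv U t) := by rw [e4]; ring
      _ = ∑ i, ∑ j, (deriv U t i * (P i j * U t j) + U t i * (P i j * deriv U t j)) := by
          rw [e2, e3]; simp [Finset.sum_add_distrib]
  -- the key energy identity
  have halg : ∀ t, 0 ≤ t → U t ⬝ᵥ P.mulVec (deriv U t)
      = -(a/2) * (U t 0)^2 - (a/2) * (U t (Fin.last N))^2 - g t := by
    intro t ht
    have h := congrArg (fun z => U t ⬝ᵥ z) (hode t ht)
    simp only [dotProduct_add, dotProduct_sub, dotProduct_smul, smul_eq_mul] at h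
    -- Q term via SBP
    have hQ : U t ⬝ᵥ Q.mulVec (U t)
        = ((U t (Fin.last N))^2 - (U t 0)^2) / 2 := by
      have ht1 : U t ⬝ᵥ Qᵀ.mulVec (U t) = U t ⬝ᵥ Q.mulVec (U t) := by
        rw [Matrix.mulVec_transpose, dotProduct_comm, ← Matrix.dotProduct_mulVec]
      have ht2 : U t ⬝ᵥ (Q + Qᵀ).mulVec (U t)
          = U t (Fin.last N) * U t (Fin.last N) - U t 0 * U t 0 := by
        rw [hSBP]; exact Bdot N hN _ _
      rw [Matrix.add_mulVec, dotProduct_add, ht1] at ht2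
      nlinarith [ht2]
    -- E B Dx term
    have hEB : U t ⬝ᵥ (E * Bmat N * Dx).mulVec (U t)
        = (U t (Fin.last N) * ε (Fin.last N)) * (Dx.mulVec (U t) (Fin.last N))
          - (U t 0 * ε 0) * (Dx.mulVec (U t) 0) := by
      rw [← Matrix.mulVec_mulVec, ← Matrix.mulVec_mulVec, hE, Matrix.dotProduct_mulVec]
      have hv : U t ᵥ* Matrix.diagonal ε = fun i => U t i * ε i :=
        funext fun i => Matrix.vecMul_diagonal _ _ _
      rw [hv, Bdot N hN]
    -- dissipation term
    have hM : U t ⬝ᵥ ((sqrtE * Dx)ᵀ * P * (sqrtE * Dx)).mulVec (U t) = g t := by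
      rw [← Matrix.mulVec_mulVec, ← Matrix.mulVec_mulVec, Matrix.dotProduct_mulVec,
        Matrix.vecMul_transpose]
    rw [hQ, hEB, hM] at h
    simp only [dotProduct_single, mul_one] at h
    nlinarith [h]
  -- derivative of the full energy functional
  set f : ℝ → ℝ := fun s => U s ⬝ᵥ P.mulVec (U s) + 2 * ∫ r in (0:ℝ)..s, g r with hf_def
  have hfd : ∀ t, HasDerivAt f (2 * (U t ⬝ᵥ P.mulVec (deriv U t)) + 2 * g t) t := by
    intro t
    have h2 : HasDerivAt (fun s => ∫ r in (0:ℝ)..s, g r) (g t) t :=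
      intervalIntegral.integral_hasDerivAt_right (hgc.intervalIntegrable _ _)
        (hgc.stronglyMeasurableAtFilter _ _) hgc.continuousAt
    exact (hquad t).add (h2.const_mul 2)
  have hanti : AntitoneOn f (Set.Ici (0:ℝ)) := by
    apply antitoneOn_of_deriv_nonpos (convex_Ici 0)
    · exact fun x _ => ((hfd x).differentiableAt).continuousAt.continuousWithinAt
    · intro x hx
      exact ((hfd x).differentiableAt).differentiableWithinAt
    · intro x hx
      rw [interior_Ici] at hx
      rw [(hfd x).deriv, halg x (le_of_lt hx)]
      nlinarith [sq_nonneg (U x 0), sq_nonneg (U x (Fin.last N)), mul_nonneg ha (sq_nonneg (U x 0)),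
        mul_nonneg ha (sq_nonneg (U x (Fin.last N)))]
  intro t ht
  have h0 : f t ≤ f 0 := hanti (Set.self_mem_Ici) ht ht
  have hf0 : f 0 = U 0 ⬝ᵥ P.mulVec (U 0) := by
    rw [hf_def]; simp
  calc U t ⬝ᵥ P.mulVec (U t) + 2 * ∫ s in (0:ℝ)..t, g s = f t := by rw [hf_def]
    _ ≤ f 0 := h0
    _ = _ := hf0
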